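/- Let ρ : [θ₀, θ₁] → ℝ be continuous and nonnegative with θ₁ - θ₀ ≤ 2π. Then the planar region S = {(r cos θ, r sin θ) : θ ∈ [θ₀, θ₁], 0 ≤ r ≤ ρ(θ)} has area (Lebesgue measure) equal to (1/2) ∫_{θ₀}^{θ₁} ρ(θ)² dθ. -/

import Mathlib

open MeasureTheory Real

set_option maxHeartbeats 1000000 in
/-- Peano's polar-coordinate area formula (1887, p. 199): the area of the
star-shaped region bounded by the continuous curve `r = ρ(θ)`, `θ ∈ [θ₀, θ₁]`,
equals `(1/2) ∫ ρ(θ)² dθ`. -/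
theorem polar_area_formula (θ₀ θ₁ : ℝ) (h01 : θ₀ ≤ θ₁) (h2π : θ₁ - θ₀ ≤ 2 * π)
    (ρ : ℝ → ℝ) (hρ : ContinuousOn ρ (Set.Icc θ₀ θ₁))
    (hρ0 : ∀ θ ∈ Set.Icc θ₀ θ₁, 0 ≤ ρ θ) :
    volume {p : ℝ × ℝ | ∃ θ ∈ Set.Icc θ₀ θ₁, ∃ r : ℝ, 0 ≤ r ∧ r ≤ ρ θ ∧
        p = (r * cos θ, r * sin θ)} =
      ENNReal.ofReal ((1 / 2) * ∫ θ in θ₀..θ₁, ρ θ ^ 2) := by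
  set S : Set (ℝ × ℝ) := {p : ℝ × ℝ | ∃ θ ∈ Set.Icc θ₀ θ₁, ∃ r : ℝ, 0 ≤ r ∧ r ≤ ρ θ ∧
      p = (r * cos θ, r * sin θ)} with hSdef
  -- a global continuous extension of ρ
  set ρ' : ℝ → ℝ := fun θ => ρ (max θ₀ (min θ θ₁)) with hρ'def
  have hclamp : ∀ θ, max θ₀ (min θ θ₁) ∈ Set.Icc θ₀ θ₁ := by
    intro θ
    exact ⟨le_max_left _ _, max_le h01 (min_le_right _ _)⟩
  have hρ'cont : Continuous ρ' := by
    apply hρ.comp_continuous (continuous_const.max (continuous_id.min continuous_const))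
    exact hclamp
  have hρ'eq : ∀ θ ∈ Set.Icc θ₀ θ₁, ρ' θ = ρ θ := by
    intro θ hθ
    have : max θ₀ (min θ θ₁) = θ := by
      rw [min_eq_left hθ.2, max_eq_right hθ.1]
    simp [ρ', this]
  -- the polar-coordinates parametrizing set
  set s : Set (ℝ × ℝ) := {p : ℝ × ℝ | p.2 ∈ Set.Ioo θ₀ θ₁ ∧ p.1 ∈ Set.Ioc 0 (ρ' p.2)}
    with hsdef
  have hs : MeasurableSet s := by
    have h1 : MeasurableSet {p : ℝ × ℝ | p.2 ∈ Set.Ioo θ₀ θ₁} :=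
      measurable_snd measurableSet_Ioo
    have h2 : MeasurableSet {p : ℝ × ℝ | 0 < p.1} :=
      measurableSet_lt measurable_const measurable_fst
    have h3 : MeasurableSet {p : ℝ × ℝ | p.1 ≤ ρ' p.2} :=
      measurableSet_le measurable_fst (hρ'cont.measurable.comp measurable_snd)
    have hseq : s = {p : ℝ × ℝ | p.2 ∈ Set.Ioo θ₀ θ₁} ∩
        ({p : ℝ × ℝ | 0 < p.1} ∩ {p : ℝ × ℝ | p.1 ≤ ρ' p.2}) := by
      ext p
      simp only [hsdef, Set.mem_setOf_eq, Set.mem_Ioc, Set.mem_inter_iff]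
    rw [hseq]
    exact h1.inter (h2.inter h3)
  -- the Jacobian
  set B : ℝ × ℝ → ℝ × ℝ →L[ℝ] ℝ × ℝ := fun p =>
    LinearMap.toContinuousLinearMap (Matrix.toLin (Module.Basis.finTwoProd ℝ) (Module.Basis.finTwoProd ℝ)
      !![cos p.2, -p.1 * sin p.2; sin p.2, p.1 * cos p.2]) with hBdef
  have hB : ∀ p ∈ s, HasFDerivWithinAt polarCoord.symm (B p) s p := fun p _ =>
    (hasFDerivAt_polarCoord_symm p).hasFDerivWithinAt
  have B_det : ∀ p, (B p).det = p.1 := by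
    intro p
    conv_rhs => rw [← one_mul p.1, ← cos_sq_add_sin_sq p.2]
    simp only [hBdef, neg_mul, LinearMap.det_toContinuousLinearMap, LinearMap.det_toLin,
      Matrix.det_fin_two_of, sub_neg_eq_add]
    ring
  -- injectivity
  have hinj : Set.InjOn polarCoord.symm s := by
    rintro ⟨r, θ⟩ ⟨hθ, hr⟩ ⟨r', θ'⟩ ⟨hθ', hr'⟩ heq
    simp only [polarCoord_symm_apply, Prod.mk.injEq] at heq
    obtain ⟨h1, h2⟩ := heq
    have hrpos : 0 < r := hr.1
    have hr'pos : 0 < r' := hr'.1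
    have hp1 : (r * cos θ) ^ 2 + (r * sin θ) ^ 2 = r ^ 2 := by
      linear_combination r ^ 2 * sin_sq_add_cos_sq θ
    have hp2 : (r' * cos θ') ^ 2 + (r' * sin θ') ^ 2 = r' ^ 2 := by
      linear_combination r' ^ 2 * sin_sq_add_cos_sq θ'
    have hrr : r ^ 2 = r' ^ 2 := by rw [← hp1, ← hp2, h1, h2]
    have hreq : r = r' := by nlinarith
    subst hreq
    have hcos : cos θ = cos θ' := mul_left_cancel₀ hrpos.ne' h1
    have hsin : sin θ = sin θ' := mul_left_cancel₀ hrpos.ne' h2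
    have hexp : Complex.exp (θ * Complex.I) = Complex.exp (θ' * Complex.I) := by
      rw [Complex.exp_mul_I, Complex.exp_mul_I, ← Complex.ofReal_cos, ← Complex.ofReal_sin,
        ← Complex.ofReal_cos, ← Complex.ofReal_sin, hcos, hsin]
    obtain ⟨n, hn⟩ := Complex.exp_eq_exp_iff_exists_int.mp hexp
    have hn' : (θ : ℂ) = θ' + n * (2 * π) := by
      have hI : ((θ : ℂ) - θ' - n * (2 * π)) * Complex.I = 0 := by
        linear_combination hn
      have h0 : ((θ : ℂ) - θ' - n * (2 * π)) = 0 := by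
        simpa [Complex.I_ne_zero] using hI
      linear_combination h0
    have hnr : θ = θ' + n * (2 * π) := by
      exact_mod_cast hn'
    have hb1 : |θ - θ'| < 2 * π := by
      rw [abs_lt]
      constructor <;> [nlinarith [hθ.1, hθ.2, hθ'.1, hθ'.2]; nlinarith [hθ.1, hθ.2, hθ'.1, hθ'.2]]
    have hn0 : n = 0 := by
      by_contra hne
      have h1n : (1 : ℝ) ≤ |(n : ℝ)| := by
        exact_mod_cast Int.one_le_abs hne
      have hdiff : θ - θ' = (n : ℝ) * (2 * π) := by linarith
      have habs : |θ - θ'| = |(n : ℝ)| * (2 * π) := by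
        rw [hdiff, abs_mul, abs_of_pos (by positivity : (0:ℝ) < 2 * π)]
      nlinarith [pi_pos]
    simp only [hn0, Int.cast_zero, zero_mul, add_zero] at hnr
    simp [hnr]
  -- the two boundary rays (as lines through the origin) are null
  set L₀ : Set (ℝ × ℝ) := ↑(Submodule.span ℝ {((cos θ₀, sin θ₀) : ℝ × ℝ)}) with hL0
  set L₁ : Set (ℝ × ℝ) := ↑(Submodule.span ℝ {((cos θ₁, sin θ₁) : ℝ × ℝ)}) with hL1
  have hline : ∀ θ : ℝ,
      volume (↑(Submodule.span ℝ {((cos θ, sin θ) : ℝ × ℝ)}) : Set (ℝ × ℝ)) = 0 := by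
    intro θ
    apply Measure.addHaar_submodule
    intro htop
    have hmem : ((-sin θ, cos θ) : ℝ × ℝ) ∈ Submodule.span ℝ {((cos θ, sin θ) : ℝ × ℝ)} := by
      rw [htop]; trivial
    obtain ⟨c, hc⟩ := Submodule.mem_span_singleton.mp hmem
    rw [Prod.ext_iff] at hc
    simp only [Prod.smul_fst, Prod.smul_snd, smul_eq_mul] at hc
    have e1 : c * cos θ * sin θ = -sin θ * sin θ := by rw [hc.1]
    have e2 : c * sin θ * cos θ = cos θ * cos θ := by rw [hc.2]
    nlinarith [sin_sq_add_cos_sq θ]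
  -- S agrees with the image up to the null rays
  have hTS : polarCoord.symm '' s ⊆ S := by
    rintro p ⟨⟨r, θ⟩, ⟨hθ, hr⟩, rfl⟩
    have hθI : θ ∈ Set.Icc θ₀ θ₁ := Set.Ioo_subset_Icc_self hθ
    exact ⟨θ, hθI, r, hr.1.le, (hρ'eq θ hθI ▸ hr.2), by simp [polarCoord_symm_apply]⟩
  have hST : S ⊆ polarCoord.symm '' s ∪ (L₀ ∪ L₁) := by
    rintro p ⟨θ, hθ, r, hr0, hrρ, rfl⟩
    rcases eq_or_lt_of_le hθ.1 with h0 | h0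
    · refine Or.inr (Or.inl ?_)
      rw [← h0]
      simp only [hL0, SetLike.mem_coe, Submodule.mem_span_singleton]
      exact ⟨r, by simp [Prod.ext_iff]⟩
    rcases eq_or_lt_of_le hθ.2 with h1 | h1
    · refine Or.inr (Or.inr ?_)
      rw [h1]
      simp only [hL1, SetLike.mem_coe, Submodule.mem_span_singleton]
      exact ⟨r, by simp [Prod.ext_iff]⟩
    rcases eq_or_lt_of_le hr0 with hr | hr
    · refine Or.inr (Or.inl ?_)
      simp only [hL0, SetLike.mem_coe, Submodule.mem_span_singleton]
      exact ⟨0, by simp [Prod.ext_iff, ← hr]⟩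
    · exact Or.inl ⟨(r, θ), ⟨⟨h0, h1⟩, hr, (hρ'eq θ hθ).symm ▸ hrρ⟩,
        by simp [polarCoord_symm_apply]⟩
  -- hence the volumes agree
  have hvol : volume S = volume (polarCoord.symm '' s) := by
    refine le_antisymm ?_ (measure_mono hTS)
    have hstep : volume S ≤ volume (polarCoord.symm '' s) + (volume L₀ + volume L₁) :=
      (measure_mono hST).trans ((measure_union_le _ _).trans
        (by gcongr; exact measure_union_le _ _))
    simpa [hL0, hL1, hline θ₀, hline θ₁] using hstep
  -- change of variables
  have hchg : volume (polarCoord.symm '' s) = ∫⁻ p in s, ENNReal.ofReal p.1 := by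
    rw [← lintegral_abs_det_fderiv_eq_addHaar_image volume hs hB hinj]
    apply setLIntegral_congr_fun_ae hs
    filter_upwards with p hp
    rw [B_det, abs_of_pos hp.2.1]
  -- Fubini
  have hfub : (∫⁻ p in s, ENNReal.ofReal p.1) =
      ∫⁻ θ in Set.Ioo θ₀ θ₁, ENNReal.ofReal (ρ' θ ^ 2 / 2) := by
    have hmeas : Measurable (s.indicator fun p : ℝ × ℝ => ENNReal.ofReal p.1) :=
      (ENNReal.measurable_ofReal.comp measurable_fst).indicator hs
    rw [← lintegral_indicator hs, Measure.volume_eq_prod,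
      lintegral_prod_symm _ hmeas.aemeasurable,
      ← lintegral_indicator measurableSet_Ioo]
    apply lintegral_congr
    intro θ
    by_cases hθ : θ ∈ Set.Ioo θ₀ θ₁
    · have hθI : θ ∈ Set.Icc θ₀ θ₁ := Set.Ioo_subset_Icc_self hθ
      have hρθ : 0 ≤ ρ' θ := (hρ'eq θ hθI).symm ▸ hρ0 θ hθI
      have hind : ∀ r : ℝ, s.indicator (fun p : ℝ × ℝ => ENNReal.ofReal p.1) (r, θ) =
          (Set.Ioc (0:ℝ) (ρ' θ)).indicator (fun r => ENNReal.ofReal r) r := by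
        intro r
        by_cases hr : r ∈ Set.Ioc (0:ℝ) (ρ' θ)
        · rw [Set.indicator_of_mem hr, Set.indicator_of_mem (by exact ⟨hθ, hr⟩)]
        · rw [Set.indicator_of_notMem hr, Set.indicator_of_notMem (fun h => hr h.2)]
      simp_rw [hind]
      rw [Set.indicator_of_mem hθ, lintegral_indicator measurableSet_Ioc,
        ← ofReal_integral_eq_lintegral_ofReal]
      · rw [← intervalIntegral.integral_of_le hρθ, integral_id]
        norm_num
      · exact continuous_id.integrableOn_Ioc
      · exact (ae_restrict_iff' measurableSet_Ioc).mpr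
          (Filter.Eventually.of_forall fun x hx => hx.1.le)
    · rw [Set.indicator_of_notMem hθ]
      have hind : ∀ r : ℝ, s.indicator (fun p : ℝ × ℝ => ENNReal.ofReal p.1) (r, θ) = 0 := by
        intro r
        exact Set.indicator_of_notMem (fun h => hθ h.1) _
      simp_rw [hind]
      exact lintegral_zero
  -- compute the outer integral
  have houter : (∫⁻ θ in Set.Ioo θ₀ θ₁, ENNReal.ofReal (ρ' θ ^ 2 / 2)) =
      ENNReal.ofReal ((1 / 2) * ∫ θ in θ₀..θ₁, ρ θ ^ 2) := by
    rw [← ofReal_integral_eq_lintegral_ofReal]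
    · congr 1
      rw [← MeasureTheory.integral_Ioc_eq_integral_Ioo,
        ← intervalIntegral.integral_of_le h01]
      have hcgr : ∀ θ ∈ Set.uIcc θ₀ θ₁, ρ' θ ^ 2 / 2 = (fun θ => ρ θ ^ 2 / 2) θ := by
        intro θ hθ
        rw [Set.uIcc_of_le h01] at hθ
        simp [hρ'eq θ hθ]
      rw [intervalIntegral.integral_congr hcgr, intervalIntegral.integral_div]
      ring
    · exact ((hρ'cont.pow 2).div_const 2).integrableOn_Ioc.mono_set Set.Ioo_subset_Ioc_self
    · exact Filter.Eventually.of_forall fun θ => by positivity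
  rw [hvol, hchg, hfub, houter]
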